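/- For every positive integer n, Σ_{i=0}^{n−1} ((−1)^{n−i−1}/(2n−2i−1)) · (2n−i)_{2i}/(i!)^2 = 3^{n−1} · (∏_{i=1}^{n−1} (6i−1)(6i+1)) / ((2n−1)!!)^2, where the empty product (for n = 1) is 1 and (2n−1)!! = 1·3·5···(2n−1). -/

import Mathlib

/-- Shifted factorial `(a)_k = a(a+1)···(a+k-1)`. -/
def shifted (a : ℚ) (k : ℕ) : ℚ := ∏ t ∈ Finset.range k, (a + t)

lemma shifted_succ (a : ℚ) (k : ℕ) : shifted a (k+1) = shifted a k * (a + k) := by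
  simp [shifted, Finset.prod_range_succ]

lemma shifted_succ' (a : ℚ) (k : ℕ) : shifted a (k+1) = a * shifted (a+1) k := by
  unfold shifted
  rw [Finset.prod_range_succ', mul_comm]
  simp only [Nat.cast_zero, add_zero]
  congr 1
  exact Finset.prod_congr rfl fun t _ => by push_cast; ring

lemma shifted_add_two (a : ℚ) (k : ℕ) :
    shifted (a+2) k * (a * (a+1)) = shifted a k * ((a+k) * (a+k+1)) := by
  have h1 : shifted a (k+1+1) = shifted a k * ((a+k) * (a+k+1)) := by
    rw [shifted_succ, shifted_succ]; push_cast; ring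
  have h2 : shifted a (k+1+1) = a * (a+1) * shifted (a+2) k := by
    rw [shifted_succ' a (k+1), shifted_succ' (a+1) k, show a+1+1 = a+2 from by ring]
    ring
  rw [← h1, h2]; ring

lemma shifted_add_two' (a : ℚ) (k : ℕ) (h0 : a ≠ 0) (h1 : a+1 ≠ 0) :
    shifted (a+2) k = shifted a k * ((a+k) * (a+k+1)) / (a * (a+1)) := by
  rw [eq_div_iff (by exact mul_ne_zero h0 h1)]
  exact shifted_add_two a k

lemma shifted_sub_one (a : ℚ) (k : ℕ) :
    shifted (a-1) (k+1+1) = (a-1) * (shifted a k * (a+k)) := by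
  have := shifted_succ' (a-1) (k+1)
  rw [show a - 1 + 1 = a from by ring] at this
  rw [this, shifted_succ]

def Uq (n i : ℕ) : ℚ :=
  (-1)^i * shifted (2*(n:ℚ) - i) (2*i) / ((2*(n:ℚ) - 2*i - 1) * (i.factorial : ℚ)^2)

def Rq (n i : ℕ) : ℚ :=
  ((i:ℚ)^2 * ((224*(n:ℚ)^4+96*(n:ℚ)^3-44*(n:ℚ)^2-24*(n:ℚ)-3)
    + (-432*(n:ℚ)^3-228*(n:ℚ)^2-16*(n:ℚ)+3)*(i:ℚ)
    + (264*(n:ℚ)^2+108*(n:ℚ)+12)*(i:ℚ)^2 + (-56*(n:ℚ)-12)*(i:ℚ)^3))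
  / ((n:ℚ)*(2*(n:ℚ)+1)^2*(2*(n:ℚ)-(i:ℚ))*(2*(n:ℚ)+1-(i:ℚ))*(2*(n:ℚ)+1-2*(i:ℚ)))

def gq (n i : ℕ) : ℚ := Rq n i * Uq n i

def cq (n : ℕ) : ℚ := 3*(6*(n:ℚ)-1)*(6*(n:ℚ)+1)/(2*(n:ℚ)+1)^2

lemma ne_of_nat {p q : ℕ} (h : p ≠ q) : (p:ℚ) ≠ (q:ℚ) := by exact_mod_cast h

set_option maxHeartbeats 2000000 in

set_option maxHeartbeats 2000000 in
lemma key1_core (N I F X e : ℚ)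
    (hN : N ≠ 0) (hF : F ≠ 0) (hI1 : I + 1 ≠ 0) (h2N1 : 2*N + 1 ≠ 0)
    (ha : 2*N - I ≠ 0) (ha1 : 2*N - I + 1 ≠ 0) (hb : 2*N + 1 - I ≠ 0)
    (hc : 2*N - (I+1) ≠ 0) (hc' : 2*N + 1 - (I+1) ≠ 0)
    (hodd1 : 2*N - 2*I - 1 ≠ 0) (hodd2 : 2*N + 1 - 2*I ≠ 0)
    (hodd3 : 2*N - 2*(I+1) - 1 ≠ 0) (hodd4 : 2*N + 1 - 2*(I+1) ≠ 0)
    (hodd5 : 2*(N+1) - 2*I - 1 ≠ 0) :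
    e * (X * ((2*N - I + 2*I) * (2*N - I + 2*I + 1)) / ((2*N - I) * (2*N - I + 1))) /
        ((2*(N+1) - 2*I - 1) * F^2)
      + 3*(6*N-1)*(6*N+1)/(2*N+1)^2 * (e * X / ((2*N - 2*I - 1) * F^2))
    = I^2 * ((224*N^4+96*N^3-44*N^2-24*N-3) + (-432*N^3-228*N^2-16*N+3)*I
          + (264*N^2+108*N+12)*I^2 + (-56*N-12)*I^3)
        / (N*(2*N+1)^2*(2*N-I)*(2*N+1-I)*(2*N+1-2*I)) * (e * X / ((2*N - 2*I - 1) * F^2))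
      - (I+1)^2 * ((224*N^4+96*N^3-44*N^2-24*N-3) + (-432*N^3-228*N^2-16*N+3)*(I+1)
          + (264*N^2+108*N+12)*(I+1)^2 + (-56*N-12)*(I+1)^3)
        / (N*(2*N+1)^2*(2*N-(I+1))*(2*N+1-(I+1))*(2*N+1-2*(I+1)))
        * (e * (-1) * ((2*N-I-1) * (X * (2*N-I+2*I))) / ((2*N - 2*(I+1) - 1) * ((I+1)*F)^2)) := by
  have f1 : 2*(N+1-I) - 1 ≠ 0 := by intro h; exact hodd5 (by linarith)
  have f2 : 2*(N-I) - 1 ≠ 0 := by intro h; exact hodd1 (by linarith)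
  have f3 : 2*(N-(I+1)) - 1 ≠ 0 := by intro h; exact hodd3 (by linarith)
  field_simp
  ring

lemma key1 (n i : ℕ) (hn : 1 ≤ n) (hi : i < n) :
    Uq (n+1) i + cq n * Uq n i = gq n i - gq n (i+1) := by
  have hN : (n:ℚ) ≠ 0 := by exact_mod_cast Nat.one_le_iff_ne_zero.mp hn
  have hF : (i.factorial : ℚ) ≠ 0 := by exact_mod_cast i.factorial_ne_zero
  have hI1 : (i:ℚ) + 1 ≠ 0 := by positivity
  have h2N1 : 2*(n:ℚ) + 1 ≠ 0 := by positivity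
  have ha : 2*(n:ℚ) - i ≠ 0 := by
    have := ne_of_nat (show 2*n ≠ i by omega); push_cast at this
    intro h; exact this (by linarith)
  have ha1 : 2*(n:ℚ) - i + 1 ≠ 0 := by
    have := ne_of_nat (show 2*n+1 ≠ i by omega); push_cast at this
    intro h; exact this (by linarith)
  have hb : 2*(n:ℚ) + 1 - i ≠ 0 := by intro h; exact ha1 (by linarith)
  have hc : 2*(n:ℚ) - (i+1) ≠ 0 := by
    have := ne_of_nat (show 2*n ≠ i+1 by omega); push_cast at this
    intro h; exact this (by linarith)
  have hc' : 2*(n:ℚ) + 1 - (i+1) ≠ 0 := by intro h; exact ha (by linarith)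
  have hodd1 : 2*(n:ℚ) - 2*i - 1 ≠ 0 := by
    have := ne_of_nat (show 2*n ≠ 2*i+1 by omega); push_cast at this
    intro h; exact this (by linarith)
  have hodd2 : 2*(n:ℚ) + 1 - 2*i ≠ 0 := by
    have := ne_of_nat (show 2*n+1 ≠ 2*i by omega); push_cast at this
    intro h; exact this (by linarith)
  have hodd3 : 2*(n:ℚ) - 2*(i+1) - 1 ≠ 0 := by
    have := ne_of_nat (show 2*n ≠ 2*(i+1)+1 by omega); push_cast at this
    intro h; exact this (by linarith)
  have hodd4 : 2*(n:ℚ) + 1 - 2*(i+1) ≠ 0 := by intro h; exact hodd1 (by linarith)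
  have hodd5 : 2*((n:ℚ)+1) - 2*i - 1 ≠ 0 := by intro h; exact hodd2 (by linarith)
  unfold gq Rq Uq cq
  rw [Nat.factorial_succ]
  push_cast
  rw [show 2*((n:ℚ)+1) - i = (2*(n:ℚ) - i) + 2 from by ring,
      shifted_add_two' _ _ ha ha1,
      show 2*(n:ℚ) - ((i:ℚ)+1) = (2*(n:ℚ) - i) - 1 from by ring,
      show 2*(i+1) = 2*i+1+1 from by ring,
      shifted_sub_one, pow_succ]
  push_cast
  linear_combination key1_core (n:ℚ) (i:ℚ) (i.factorial : ℚ) (shifted (2*(n:ℚ) - (i:ℚ)) (2*i)) ((-1:ℚ)^i) hN hF hI1 h2N1 ha ha1 hb hc hc' hodd1 hodd2 hodd3 hodd4 hodd5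

set_option maxHeartbeats 1000000 in
lemma key2_core (N F X e : ℚ) (hN : N ≠ 0) (hF : F ≠ 0)
    (h1 : 2*N - N ≠ 0) (h2 : 2*N - N + 1 ≠ 0) (h3 : 2*N + 1 - N ≠ 0)
    (h7 : 2*N + 1 ≠ 0) :
    e * (X * ((2*N - N + 2*N) * (2*N - N + 2*N + 1)) / ((2*N - N) * (2*N - N + 1))) /
        ((2*(N+1) - 2*N - 1) * F^2)
    = N^2 * ((224*N^4+96*N^3-44*N^2-24*N-3) + (-432*N^3-228*N^2-16*N+3)*N
          + (264*N^2+108*N+12)*N^2 + (-56*N-12)*N^3)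
        / (N*(2*N+1)^2*(2*N-N)*(2*N+1-N)*(2*N+1-2*N)) * (e * X / ((2*N - 2*N - 1) * F^2)) := by
  have h4 : 2*(N+1) - 2*N - 1 ≠ 0 := by intro h; linarith
  have h5 : 2*N - 2*N - 1 ≠ 0 := by intro h; linarith
  have h6 : 2*N + 1 - 2*N ≠ 0 := by intro h; linarith
  have h8 : N*(2-1) + 1 ≠ 0 := by intro h; exact h2 (by linarith)
  have h9 : 2*(N+1-N) - 1 ≠ 0 := by intro h; linarith
  field_simp
  ring

lemma key2 (n : ℕ) (hn : 1 ≤ n) : Uq (n+1) n = gq n n := by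
  have hn' : (1:ℚ) ≤ (n:ℚ) := by exact_mod_cast hn
  have hN : (n:ℚ) ≠ 0 := by intro h; linarith
  have hF : (n.factorial : ℚ) ≠ 0 := by exact_mod_cast n.factorial_ne_zero
  have h1 : 2*(n:ℚ) - n ≠ 0 := by intro h; linarith
  have h2 : 2*(n:ℚ) - n + 1 ≠ 0 := by intro h; linarith
  have h3 : 2*(n:ℚ) + 1 - n ≠ 0 := by intro h; linarith
  have h7 : 2*(n:ℚ) + 1 ≠ 0 := by intro h; linarith
  unfold gq Rq Uq
  push_cast
  rw [show 2*((n:ℚ)+1) - n = (2*(n:ℚ) - n) + 2 from by ring,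
      shifted_add_two' _ _ h1 h2]
  push_cast
  linear_combination key2_core (n:ℚ) (n.factorial : ℚ) (shifted (2*(n:ℚ) - (n:ℚ)) (2*n)) ((-1:ℚ)^n) hN hF h1 h2 h3 h7

lemma sum_rec (n : ℕ) (hn : 1 ≤ n) :
    ∑ i ∈ Finset.range (n+1), Uq (n+1) i = -cq n * ∑ i ∈ Finset.range n, Uq n i := by
  rw [Finset.sum_range_succ]
  have h1 : ∀ i ∈ Finset.range n, Uq (n+1) i = (gq n i - gq n (i+1)) - cq n * Uq n i := by
    intro i hi
    have := key1 n i hn (Finset.mem_range.mp hi)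
    linarith
  rw [Finset.sum_congr rfl h1, Finset.sum_sub_distrib, Finset.sum_range_sub', key2 n hn]
  have hg0 : gq n 0 = 0 := by simp [gq, Rq]
  rw [hg0, ← Finset.mul_sum]
  ring

lemma lhs_eq (n : ℕ) (hn : 1 ≤ n) :
    ∑ i ∈ Finset.range n,
      ((-1 : ℚ)^(n - i - 1) / (2*(n:ℚ) - 2*(i:ℚ) - 1)) *
        (shifted (2*(n:ℚ) - (i:ℚ)) (2*i) / (Nat.factorial i : ℚ)^2)
    = (-1)^(n-1) * ∑ i ∈ Finset.range n, Uq n i := by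
  rw [Finset.mul_sum]
  apply Finset.sum_congr rfl
  intro i hi
  have hi' := Finset.mem_range.mp hi
  have hpow : (-1:ℚ)^(n-1) = (-1)^(n-i-1) * (-1)^i := by
    rw [← pow_add]; congr 1; omega
  have h2 : (-1:ℚ)^i * (-1)^i = 1 := by
    rw [← pow_add, ← two_mul, pow_mul]; norm_num
  rw [hpow]
  unfold Uq
  rw [div_mul_div_comm, ← mul_div_assoc]
  congr 1
  linear_combination (-((-1:ℚ)^(n-i-1) * shifted (2*(n:ℚ) - (i:ℚ)) (2*i))) * h2

theorem sum_eq_product (n : ℕ) (hn : 1 ≤ n) :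
    ∑ i ∈ Finset.range n,
      ((-1 : ℚ)^(n - i - 1) / (2*(n:ℚ) - 2*(i:ℚ) - 1)) *
        (shifted (2*(n:ℚ) - (i:ℚ)) (2*i) / (Nat.factorial i : ℚ)^2)
    = 3^(n-1) * (∏ i ∈ Finset.range (n-1), (6*((i:ℚ)+1) - 1) * (6*((i:ℚ)+1) + 1)) /
        (∏ i ∈ Finset.range n, (2*(i:ℚ) + 1))^2 := by
  induction n, hn using Nat.le_induction with
  | base => norm_num [shifted]
  | succ n hn ih =>
    have hsplit : (-1:ℚ)^n = -(-1:ℚ)^(n-1) := by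
      conv_lhs => rw [show n = (n-1)+1 from by omega]
      rw [pow_succ]; ring
    have step : ∑ i ∈ Finset.range (n+1),
        ((-1 : ℚ)^(n+1 - i - 1) / (2*((n+1:ℕ):ℚ) - 2*(i:ℚ) - 1)) *
          (shifted (2*((n+1:ℕ):ℚ) - (i:ℚ)) (2*i) / (Nat.factorial i : ℚ)^2)
        = cq n * ∑ i ∈ Finset.range n,
            ((-1 : ℚ)^(n - i - 1) / (2*(n:ℚ) - 2*(i:ℚ) - 1)) *
              (shifted (2*(n:ℚ) - (i:ℚ)) (2*i) / (Nat.factorial i : ℚ)^2) := by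
      rw [lhs_eq (n+1) (by omega), lhs_eq n hn, sum_rec n hn,
          show n+1-1 = n from rfl, hsplit]
      ring
    rw [step, ih]
    -- now: cq n * RHS(n) = RHS(n+1)
    have hD : (∏ i ∈ Finset.range n, (2*(i:ℚ) + 1)) ≠ 0 := by
      apply Finset.prod_ne_zero_iff.mpr
      intro i _
      positivity
    have h2n1 : 2*(n:ℚ) + 1 ≠ 0 := by positivity
    have h3 : (3:ℚ)^n = 3^(n-1)*3 := by
      conv_lhs => rw [show n = (n-1)+1 from by omega]
      rw [pow_succ]
    have hsplitP : (∏ i ∈ Finset.range n, (6*((i:ℚ)+1) - 1) * (6*((i:ℚ)+1) + 1))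
        = (∏ i ∈ Finset.range (n-1), (6*((i:ℚ)+1) - 1) * (6*((i:ℚ)+1) + 1)) *
          ((6*(n:ℚ) - 1) * (6*(n:ℚ) + 1)) := by
      conv_lhs => rw [show n = (n-1)+1 from by omega, Finset.prod_range_succ]
      rw [Nat.cast_sub hn, Nat.cast_one]
      ring
    have hsplitD : (∏ i ∈ Finset.range (n+1), (2*(i:ℚ) + 1))
        = (∏ i ∈ Finset.range n, (2*(i:ℚ) + 1)) * (2*(n:ℚ)+1) :=
      Finset.prod_range_succ _ n
    rw [show n+1-1 = n from rfl, h3, hsplitP, hsplitD]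
    unfold cq
    field_simp
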